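/- Let [b1, ..., bk] be a list of integers with each bi ≥ 2, and write hj([b1,...,bk]) = m/n in lowest terms. Then the reversed list satisfies hj([bk, ..., b1]) = m/n' for some positive integer n' < m with n·n' ≡ 1 (mod m). -/

import Mathlib

def hj : List ℤ → ℚ
  | [] => 0
  | b :: l => (b : ℚ) - 1 / hj l

def hjf : List ℤ → ℤ × ℤ × ℤ × ℤ
  | [] => (1, 0, 0, -1)
  | b :: l => (b * (hjf l).1 - (hjf l).2.1, (hjf l).1,
      b * (hjf l).2.2.1 - (hjf l).2.2.2, (hjf l).2.2.1)

lemma hjf_det (l : List ℤ) :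
    (hjf l).2.1 * (hjf l).2.2.1 - (hjf l).1 * (hjf l).2.2.2 = 1 := by
  induction l with
  | nil => simp [hjf]
  | cons b l ih =>
    simp only [hjf]
    ring_nf
    ring_nf at ih
    linarith

lemma hjf_inv (l : List ℤ) (hne : l ≠ []) (hall : ∀ b ∈ l, 2 ≤ b) :
    1 ≤ (hjf l).2.1 ∧ (hjf l).2.1 < (hjf l).1 ∧ 0 ≤ (hjf l).2.2.2 ∧
    (hjf l).2.2.2 < (hjf l).2.2.1 ∧ 1 ≤ (hjf l).2.1 - (hjf l).2.2.2 ∧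
    (hjf l).2.1 - (hjf l).2.2.2 ≤ (hjf l).1 - (hjf l).2.2.1 := by
  induction l with
  | nil => simp at hne
  | cons b l ih =>
    have hb : 2 ≤ b := hall b List.mem_cons_self
    cases l with
    | nil => simp [hjf]; omega
    | cons c l' =>
      obtain ⟨h1, h2, h3, h4, h5, h6⟩ := ih (by simp) (fun x hx => hall x (List.mem_cons_of_mem b hx))
      simp only [hjf] at *
      refine ⟨by linarith, by nlinarith, by linarith, by nlinarith, by linarith, by nlinarith⟩

lemma hj_eq (l : List ℤ) (hne : l ≠ []) (hall : ∀ b ∈ l, 2 ≤ b) :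
    hj l = ((hjf l).1 : ℚ) / ((hjf l).2.1 : ℚ) := by
  induction l with
  | nil => simp at hne
  | cons b l ih =>
    cases l with
    | nil => simp [hj, hjf]
    | cons c l' =>
      have hall' : ∀ x ∈ c :: l', 2 ≤ x := fun x hx => hall x (List.mem_cons_of_mem b hx)
      obtain ⟨h1, h2, _, _, _, _⟩ := hjf_inv (c :: l') (by simp) hall'
      have ihh := ih (by simp) hall'
      have hp : ((hjf (c :: l')).1 : ℚ) ≠ 0 := by
        exact_mod_cast (by omega : (hjf (c :: l')).1 ≠ 0)
      have hq : ((hjf (c :: l')).2.1 : ℚ) ≠ 0 := by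
        exact_mod_cast (by omega : (hjf (c :: l')).2.1 ≠ 0)
      show (b : ℚ) - 1 / hj (c :: l') = _
      rw [ihh]
      show (b : ℚ) - 1 / (_ / _) =
        ((b * (hjf (c::l')).1 - (hjf (c::l')).2.1 : ℤ) : ℚ) / ((hjf (c::l')).1 : ℚ)
      push_cast
      field_simp

lemma hjf_append (l : List ℤ) (b : ℤ) :
    hjf (l ++ [b]) = (b * (hjf l).1 - (hjf l).2.2.1, b * (hjf l).2.1 - (hjf l).2.2.2,
      (hjf l).1, (hjf l).2.1) := by
  induction l with
  | nil => simp [hjf]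
  | cons c l ih =>
    rw [List.cons_append]
    show hjf (c :: (l ++ [b])) = _
    simp only [hjf, ih]
    refine Prod.ext (by ring) (Prod.ext (by ring) (Prod.ext (by ring) (by ring)))

lemma hjf_reverse (l : List ℤ) :
    hjf l.reverse = ((hjf l).1, (hjf l).2.2.1, (hjf l).2.1, (hjf l).2.2.2) := by
  induction l with
  | nil => simp [hjf]
  | cons b l ih =>
    rw [List.reverse_cons, hjf_append, ih]
    simp only [hjf]

theorem hj_reverse (l : List ℤ) (hne : l ≠ []) (hall : ∀ b ∈ l, 2 ≤ b)
    (m n : ℕ) (hm : 0 < m) (hn : 0 < n) (hcop : Nat.Coprime m n)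
    (hhj : hj l = (m : ℚ) / (n : ℚ)) :
    ∃ n' : ℕ, 0 < n' ∧ n' < m ∧ hj l.reverse = (m : ℚ) / (n' : ℚ) ∧
      n * n' ≡ 1 [MOD m] := by
  obtain ⟨h1, h2, h3, h4, h5, h6⟩ := hjf_inv l hne hall
  have hdet := hjf_det l
  set p := (hjf l).1 with hp
  set q := (hjf l).2.1 with hq
  set r := (hjf l).2.2.1 with hr
  set s := (hjf l).2.2.2 with hs
  have heq := hj_eq l hne hall
  rw [hhj] at heq
  have hq0 : (q : ℚ) ≠ 0 := by exact_mod_cast (by omega : q ≠ 0)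
  have hn0 : ((n : ℤ) : ℚ) ≠ 0 := by exact_mod_cast hn.ne'
  have hcross : (m : ℤ) * q = p * n := by
    have : (m : ℚ) * (q : ℚ) = (p : ℚ) * (n : ℚ) := by
      rw [div_eq_div_iff (by exact_mod_cast hn.ne') (by exact hq0)] at heq
      rw [hp, hq]
      linarith
    exact_mod_cast this
  have hcopP : IsCoprime p q := ⟨-s, r, by linarith⟩
  have hcopM : IsCoprime (m : ℤ) (n : ℤ) := by
    rw [Int.isCoprime_iff_gcd_eq_one]
    exact_mod_cast hcop
  have hpm : p = (m : ℤ) := by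
    have hd1 : (m : ℤ) ∣ p := by
      have : (m : ℤ) ∣ p * n := ⟨q, by linarith⟩
      exact IsCoprime.dvd_of_dvd_mul_right hcopM this
    have hd2 : p ∣ (m : ℤ) := by
      have : p ∣ (m : ℤ) * q := ⟨n, by linarith⟩
      exact IsCoprime.dvd_of_dvd_mul_right hcopP this
    exact Int.dvd_antisymm (by linarith) (by positivity) hd2 hd1
  have hqn : q = (n : ℤ) := by
    have hm0 : (m : ℤ) ≠ 0 := by positivity
    have := hcross
    rw [hpm] at this
    exact mul_left_cancel₀ hm0 this
  have hr0 : (0 : ℤ) ≤ r := by linarith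
  have hrcast : ((r.toNat : ℕ) : ℚ) = ((r : ℤ) : ℚ) := by
    exact_mod_cast Int.toNat_of_nonneg hr0
  refine ⟨r.toNat, by omega, by omega, ?_, ?_⟩
  · have hrevne : l.reverse ≠ [] := by simp [hne]
    have hrev := hj_eq l.reverse hrevne (fun b hb => hall b (List.mem_reverse.mp hb))
    rw [hrev, hjf_reverse]
    simp only [← hp, ← hq, ← hr, ← hs]
    rw [hpm, hrcast]
    push_cast
    ring
  · have key : (n : ℤ) * r = 1 + (m : ℤ) * s := by
      rw [← hqn, ← hpm]; linarith
    have hkeyN : n * r.toNat = 1 + m * s.toNat := by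
      have : (↑(n * r.toNat) : ℤ) = (↑(1 + m * s.toNat) : ℤ) := by
        push_cast [Int.toNat_of_nonneg h3, Int.toNat_of_nonneg hr0]
        exact key
      exact_mod_cast this
    show n * r.toNat % m = 1 % m
    rw [hkeyN, Nat.add_mul_mod_self_left]
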